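/- arXiv:2205.14202 — 4 statements merged into one kernel-verified Lean document; each statement's English description precedes it below -/
import Mathlib

section
/- If ᾱ = log(1/min_i p̄_i) / (β − min_i b_i) with β > min_i b_i, then f(ᾱ) ≤ 0 where f(α) = −βα − log(∑_{s'} p̄_{s'} e^{−α b_{s'}}); consequently, since f(0) = 0 and f is concave, any maximizer of f over ℝ₊ lies in [0, ᾱ]. -/
open Finset in
/-- If ᾱ = log(1 / min_i p̄_i) / (β − min_i b_i) with β > min_i b_i, then f(ᾱ) ≤ 0,
where f(α) = −βα − log(∑_{s'} p̄_{s'} e^{−α b_{s'}}); consequently (f(0) = 0, f concave)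
any maximizer of f over ℝ₊ lies in [0, ᾱ]. -/
theorem kl_dual_upper_bound {S : ℕ} [NeZero S] (pbar b : Fin S → ℝ) (β : ℝ)
    (hp0 : ∀ i, 0 < pbar i) (hp1 : ∑ i, pbar i = 1)
    (hb : ∀ i, 0 ≤ b i) (hβ : (⨅ i, b i) < β) :
    (fun α : ℝ => -β * α - Real.log (∑ s', pbar s' * Real.exp (-α * b s')))
        (Real.log (1 / ⨅ i, pbar i) / (β - ⨅ i, b i)) ≤ 0 ∧
    ∀ α : ℝ, 0 ≤ α →
      (∀ α' : ℝ, 0 ≤ α' →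
        (fun α : ℝ => -β * α - Real.log (∑ s', pbar s' * Real.exp (-α * b s'))) α' ≤
        (fun α : ℝ => -β * α - Real.log (∑ s', pbar s' * Real.exp (-α * b s'))) α) →
      α ≤ Real.log (1 / ⨅ i, pbar i) / (β - ⨅ i, b i) := by
  have hSpos : 0 < S := Nat.pos_of_ne_zero (NeZero.ne S)
  haveI : Nonempty (Fin S) := ⟨⟨0, hSpos⟩⟩
  obtain ⟨ib, hib⟩ := exists_eq_ciInf_of_finite (f := b)
  obtain ⟨ip, hip⟩ := exists_eq_ciInf_of_finite (f := pbar)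
  set bmin := ⨅ i, b i with hbmin
  set pmin := ⨅ i, pbar i with hpmin
  have hpminpos : 0 < pmin := hip ▸ hp0 ip
  have hpmin_le : ∀ i, pmin ≤ pbar i := fun i => ciInf_le (Set.Finite.bddBelow (Set.finite_range _)) i
  have hpmin1 : pmin ≤ 1 := by
    calc pmin ≤ pbar ib := hpmin_le ib
    _ ≤ ∑ i, pbar i := Finset.single_le_sum (fun i _ => (hp0 i).le) (Finset.mem_univ ib)
    _ = 1 := hp1
  have hβb : 0 < β - bmin := sub_pos.2 hβ
  have hlog : 0 ≤ Real.log (1 / pmin) := by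
    rw [Real.log_div one_ne_zero hpminpos.ne', Real.log_one]
    simp [Real.log_nonpos hpminpos.le hpmin1]
  -- key bound
  have key : ∀ α : ℝ,
      -β * α - Real.log (∑ s', pbar s' * Real.exp (-α * b s'))
        ≤ -α * (β - bmin) + Real.log (1 / pmin) := by
    intro α
    have hterm : pmin * Real.exp (-α * bmin) ≤ ∑ s', pbar s' * Real.exp (-α * b s') := by
      calc pmin * Real.exp (-α * bmin)
          ≤ pbar ib * Real.exp (-α * b ib) := by
            rw [hib]
            exact mul_le_mul_of_nonneg_right (hpmin_le ib) (Real.exp_pos _).le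
        _ ≤ ∑ s', pbar s' * Real.exp (-α * b s') :=
            Finset.single_le_sum (f := fun s' => pbar s' * Real.exp (-α * b s'))
              (fun i _ => mul_nonneg (hp0 i).le (Real.exp_pos _).le) (Finset.mem_univ ib)
    have hlogle : Real.log pmin + (-α * bmin)
        ≤ Real.log (∑ s', pbar s' * Real.exp (-α * b s')) := by
      have := Real.log_le_log (mul_pos hpminpos (Real.exp_pos _)) hterm
      rwa [Real.log_mul hpminpos.ne' (Real.exp_pos _).ne', Real.log_exp] at this
    have h1 : Real.log (1 / pmin) = -Real.log pmin := by
      rw [Real.log_div one_ne_zero hpminpos.ne', Real.log_one]; ring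
    nlinarith [hlogle]
  constructor
  · have := key (Real.log (1 / pmin) / (β - bmin))
    simp only []
    have heq : Real.log (1 / pmin) / (β - bmin) * (β - bmin) = Real.log (1 / pmin) :=
      div_mul_cancel₀ _ hβb.ne'
    nlinarith [this]
  · intro α hα hmax
    have h0 : (fun α : ℝ => -β * α - Real.log (∑ s', pbar s' * Real.exp (-α * b s'))) 0 = 0 := by
      simp [hp1]
    have := hmax 0 le_rfl
    rw [h0] at this
    have h2 := key α
    have h3 : 0 ≤ -α * (β - bmin) + Real.log (1 / pmin) := le_trans this h2
    rw [le_div_iff₀ hβb]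
    nlinarith
end

section
/- For the KL divergence, the optimal value of the projection problem min{ ∑_{s'} p_{s'} log(p_{s'}/p̄_{s'}) : p ∈ Δ_S, bᵀp ≤ β } equals sup_{α ≥ 0} { −βα − log(∑_{s'} p̄_{s'} e^{−α b_{s'}}) }, provided p̄ ∈ Δ_S with p̄ > 0 and min_i b_i ≤ β < p̄ᵀb. -/
open Finset Real Filter

lemma gibbs {S : ℕ} [NeZero S] (p q : Fin S → ℝ) (hp : ∀ i, 0 ≤ p i) (hq : ∀ i, 0 < q i)
    (hps : ∑ i, p i = 1) (hqs : ∑ i, q i = 1) :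
    0 ≤ ∑ i, p i * Real.log (p i / q i) := by
  have key : ∀ i, p i - q i ≤ p i * Real.log (p i / q i) := by
    intro i
    rcases (hp i).eq_or_lt with h | h
    · simp [← h]
      linarith [(hq i).le]
    · have hlog : Real.log (q i / p i) ≤ q i / p i - 1 :=
        Real.log_le_sub_one_of_pos (div_pos (hq i) h)
      have h2 : 1 - q i / p i ≤ Real.log (p i / q i) := by
        rw [show p i / q i = (q i / p i)⁻¹ by rw [inv_div], Real.log_inv]
        linarith
      calc p i - q i = p i * (1 - q i / p i) := by field_simp
        _ ≤ p i * Real.log (p i / q i) := mul_le_mul_of_nonneg_left h2 h.le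
  calc (0:ℝ) = ∑ i, (p i - q i) := by rw [Finset.sum_sub_distrib, hps, hqs]; ring
    _ ≤ _ := Finset.sum_le_sum fun i _ => key i

lemma weak_duality {S : ℕ} [NeZero S] (pbar b : Fin S → ℝ) (β α : ℝ) (hp0 : ∀ i, 0 < pbar i)
    (hα : 0 ≤ α) (p : Fin S → ℝ) (hp : ∀ i, 0 ≤ p i) (hps : ∑ i, p i = 1)
    (hpb : ∑ i, b i * p i ≤ β) :
    -β * α - Real.log (∑ i, pbar i * Real.exp (-α * b i)) ≤
      ∑ i, p i * Real.log (p i / pbar i) := by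
  set Z := ∑ i, pbar i * Real.exp (-α * b i) with hZ
  have hZpos : 0 < Z :=
    Finset.sum_pos (fun i _ => mul_pos (hp0 i) (Real.exp_pos _)) Finset.univ_nonempty
  set q : Fin S → ℝ := fun i => pbar i * Real.exp (-α * b i) / Z with hqdef
  have hqpos : ∀ i, 0 < q i := fun i => div_pos (mul_pos (hp0 i) (Real.exp_pos _)) hZpos
  have hqs : ∑ i, q i = 1 := by
    rw [hqdef, ← Finset.sum_div, ← hZ, div_self hZpos.ne']
  have hgibbs := gibbs p q hp hqpos hps hqs
  have key : ∀ i, p i * Real.log (p i / q i)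
      = p i * Real.log (p i / pbar i) + α * (b i * p i) + Real.log Z * p i := by
    intro i
    rcases (hp i).eq_or_lt with h | h
    · simp [← h]
    · have h2 : pbar i ≠ 0 := (hp0 i).ne'
      have hlq : Real.log (p i / q i) = Real.log (p i / pbar i) + α * b i + Real.log Z := by
        rw [Real.log_div h.ne' (hqpos i).ne', Real.log_div h.ne' h2, hqdef,
          Real.log_div (by positivity) hZpos.ne',
          Real.log_mul h2 (Real.exp_ne_zero _), Real.log_exp]
        ring
      rw [hlq]; ring
  have hsum : ∑ i, p i * Real.log (p i / q i)
      = ∑ i, p i * Real.log (p i / pbar i) + α * ∑ i, b i * p i + Real.log Z := by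
    rw [Finset.sum_congr rfl (fun i _ => key i), Finset.sum_add_distrib,
      Finset.sum_add_distrib, ← Finset.mul_sum, ← Finset.mul_sum, hps, mul_one]
  nlinarith [mul_le_mul_of_nonneg_left hpb hα]

lemma tendsto_exp_neg_mul (c d : ℝ) (hd : 0 < d) :
    Tendsto (fun α : ℝ => c * Real.exp (-α * d)) atTop (nhds 0) := by
  have h1 : Tendsto (fun α : ℝ => -α * d) atTop atBot :=
    (tendsto_neg_atTop_atBot).atBot_mul_const hd
  have h2 := Real.tendsto_exp_atBot.comp h1
  simpa using h2.const_mul c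

open Finset in
/-- For the KL divergence, the optimal value of the projection problem
min { ∑ p log(p/p̄) : p ∈ Δ_S, bᵀp ≤ β } equals
sup_{α ≥ 0} { −βα − log(∑ p̄ e^{−α b}) }, provided p̄ > 0 and min b ≤ β < p̄ᵀb. -/
theorem kl_projection_duality {S : ℕ} [NeZero S] (pbar b : Fin S → ℝ) (β : ℝ)
    (hp0 : ∀ i, 0 < pbar i) (hp1 : ∑ i, pbar i = 1)
    (hb : ∀ i, 0 ≤ b i) (hβ0 : 0 ≤ β)
    (hβ1 : (⨅ i, b i) ≤ β) (hβ2 : β < ∑ i, pbar i * b i) :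
    sInf {v : ℝ | ∃ p : Fin S → ℝ, (∀ i, 0 ≤ p i) ∧ (∑ i, p i = 1) ∧
        (∑ i, b i * p i) ≤ β ∧ v = ∑ s', p s' * Real.log (p s' / pbar s')} =
    sSup {v : ℝ | ∃ α : ℝ, 0 ≤ α ∧
        v = -β * α - Real.log (∑ s', pbar s' * Real.exp (-α * b s'))} := by
  classical
  haveI : Nonempty (Fin S) := ⟨⟨0, Nat.pos_of_ne_zero (NeZero.ne S)⟩⟩
  set P := {v : ℝ | ∃ p : Fin S → ℝ, (∀ i, 0 ≤ p i) ∧ (∑ i, p i = 1) ∧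
      (∑ i, b i * p i) ≤ β ∧ v = ∑ s', p s' * Real.log (p s' / pbar s')} with hPdef
  set D := {v : ℝ | ∃ α : ℝ, 0 ≤ α ∧
      v = -β * α - Real.log (∑ s', pbar s' * Real.exp (-α * b s'))} with hDdef
  obtain ⟨j0, hj0⟩ : ∃ j0, ∀ i, b j0 ≤ b i := Finite.exists_min b
  have hj0β : b j0 ≤ β := le_trans (le_ciInf hj0) hβ1
  have hZpos : ∀ α : ℝ, 0 < ∑ s', pbar s' * Real.exp (-α * b s') := fun α =>
    Finset.sum_pos (fun i _ => mul_pos (hp0 i) (Real.exp_pos _)) Finset.univ_nonempty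
  have h0D : (0:ℝ) ∈ D := ⟨0, le_refl 0, by simp [hp1]⟩
  have weak : ∀ v ∈ P, ∀ w ∈ D, w ≤ v := by
    rintro v ⟨p, hp, hps, hpb, rfl⟩ w ⟨α, hα, rfl⟩
    exact weak_duality pbar b β α hp0 hα p hp hps hpb
  have hmain : ∃ v ∈ P, v ≤ sSup D := by
    by_cases hall : ∀ i, β ≤ b i
    · -- limiting case: β = min b
      have hj0eq : b j0 = β := le_antisymm hj0β (hall j0)
      set I := Finset.univ.filter (fun i => b i = β) with hIdef
      have hj0I : j0 ∈ I := Finset.mem_filter.mpr ⟨Finset.mem_univ _, hj0eq⟩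
      set W := ∑ i ∈ I, pbar i with hWdef
      have hWpos : 0 < W := Finset.sum_pos (fun i _ => hp0 i) ⟨j0, hj0I⟩
      set phat : Fin S → ℝ := fun i => if b i = β then pbar i / W else 0 with hphat
      have hphat0 : ∀ i, 0 ≤ phat i := by
        intro i; rw [hphat]; dsimp only
        split_ifs
        · exact div_nonneg (hp0 i).le hWpos.le
        · exact le_refl 0
      have hphats : ∑ i, phat i = 1 := by
        rw [hphat]
        rw [← Finset.sum_filter, ← hIdef, ← Finset.sum_div, ← hWdef, div_self hWpos.ne']
      have hphatb : ∑ i, b i * phat i = β := by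
        have : ∀ i, b i * phat i = (if b i = β then β * (pbar i / W) else 0) := by
          intro i; rw [hphat]; dsimp only
          split_ifs with h
          · rw [h]
          · ring
        rw [Finset.sum_congr rfl (fun i _ => this i), ← Finset.sum_filter, ← hIdef,
          ← Finset.mul_sum, ← Finset.sum_div, ← hWdef, div_self hWpos.ne', mul_one]
      have hval : ∑ s', phat s' * Real.log (phat s' / pbar s') = -Real.log W := by
        have : ∀ i, phat i * Real.log (phat i / pbar i)
            = (if b i = β then (pbar i / W) * Real.log W⁻¹ else 0) := by
          intro i; rw [hphat]; dsimp only
          split_ifs with h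
          · congr 1
            congr 1
            rw [div_right_comm, div_self (hp0 i).ne', one_div]
          · simp
        rw [Finset.sum_congr rfl (fun i _ => this i), ← Finset.sum_filter, ← hIdef,
          ← Finset.sum_mul, ← Finset.sum_div, ← hWdef, div_self hWpos.ne', one_mul,
          Real.log_inv]
      have hvP : (-Real.log W) ∈ P := ⟨phat, hphat0, hphats, hphatb.le, hval.symm⟩
      have hBddD : BddAbove D := ⟨-Real.log W, fun w hw => weak _ hvP w hw⟩
      refine ⟨-Real.log W, hvP, ?_⟩
      -- dual values tend to -log W
      have hT : Tendsto (fun α : ℝ => ∑ s', pbar s' * Real.exp (-α * (b s' - β)))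
          atTop (nhds W) := by
        have hWeq : W = ∑ s', (if b s' = β then pbar s' else 0) := by
          rw [hWdef, Finset.sum_filter]
        rw [hWeq]
        apply tendsto_finset_sum
        intro i _
        by_cases hbi : b i = β
        · simp only [hbi, sub_self, mul_zero, Real.exp_zero, mul_one, if_pos]
          exact tendsto_const_nhds
        · have hgt : 0 < b i - β := sub_pos.mpr (lt_of_le_of_ne (hall i) (Ne.symm hbi))
          simpa [hbi] using tendsto_exp_neg_mul (pbar i) _ hgt
      have hg : ∀ α : ℝ, -β * α - Real.log (∑ s', pbar s' * Real.exp (-α * b s'))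
          = -Real.log (∑ s', pbar s' * Real.exp (-α * (b s' - β))) := by
        intro α
        have hfac : ∑ s', pbar s' * Real.exp (-α * (b s' - β))
            = Real.exp (β * α) * ∑ s', pbar s' * Real.exp (-α * b s') := by
          rw [Finset.mul_sum]
          refine Finset.sum_congr rfl fun i _ => ?_
          rw [mul_comm (Real.exp (β * α)), mul_assoc, ← Real.exp_add]
          ring_nf
        rw [hfac, Real.log_mul (Real.exp_ne_zero _) (hZpos α).ne', Real.log_exp]
        ring
      have hTen : Tendsto (fun α : ℝ =>
          -β * α - Real.log (∑ s', pbar s' * Real.exp (-α * b s')))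
          atTop (nhds (-Real.log W)) := by
        simp_rw [hg]
        exact ((Real.continuousAt_log hWpos.ne').tendsto.comp hT).neg
      refine le_of_tendsto hTen ?_
      filter_upwards [eventually_ge_atTop (0:ℝ)] with α hα
      exact le_csSup hBddD ⟨α, hα, rfl⟩
    · -- interior case: some b j < β, Lagrange multiplier exists
      push_neg at hall
      obtain ⟨j, hj⟩ := hall
      have hj0β' : b j0 < β := lt_of_le_of_lt (hj0 j) hj
      set G : ℝ → ℝ := fun α => ∑ i, pbar i * (b i - β) * Real.exp (-α * b i) with hGdef
      have hGcont : Continuous G := by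
        apply continuous_finset_sum
        intro i _
        exact continuous_const.mul (Real.continuous_exp.comp (continuous_id.neg.mul continuous_const))
      have hG0 : 0 < G 0 := by
        have h1 : G 0 = ∑ i, (pbar i * b i - β * pbar i) :=
          Finset.sum_congr rfl fun i _ => by
            rw [show (-(0:ℝ) * b i) = 0 by ring, Real.exp_zero, mul_one]; ring
        have h2 : G 0 = (∑ i, pbar i * b i) - β := by
          rw [h1, Finset.sum_sub_distrib, ← Finset.mul_sum, hp1, mul_one]
        rw [h2]; linarith
      have hEv : ∀ᶠ α in atTop, G α < 0 := by
        set Ghat : ℝ → ℝ := fun α => ∑ i, pbar i * (b i - β) * Real.exp (-α * (b i - b j0))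
          with hGhatdef
        have hL : Tendsto Ghat atTop
            (nhds (∑ i, if b i = b j0 then pbar i * (b i - β) else 0)) := by
          rw [hGhatdef]
          apply tendsto_finset_sum
          intro i _
          by_cases hbi : b i = b j0
          · simp only [hbi, sub_self, mul_zero, Real.exp_zero, mul_one, if_pos]
            exact tendsto_const_nhds
          · have hgt : 0 < b i - b j0 := sub_pos.mpr (lt_of_le_of_ne (hj0 i) (Ne.symm hbi))
            simpa [hbi] using tendsto_exp_neg_mul (pbar i * (b i - β)) _ hgt
        have hLneg : (∑ i, if b i = b j0 then pbar i * (b i - β) else 0) < 0 := by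
          rw [← Finset.sum_filter]
          apply Finset.sum_neg
          · intro i hi
            have hbi : b i = b j0 := (Finset.mem_filter.mp hi).2
            have : b i - β < 0 := by rw [hbi]; linarith
            exact mul_neg_of_pos_of_neg (hp0 i) this
          · exact ⟨j0, Finset.mem_filter.mpr ⟨Finset.mem_univ _, rfl⟩⟩
        have hGhatEv : ∀ᶠ α in atTop, Ghat α < 0 := hL.eventually_lt_const hLneg
        filter_upwards [hGhatEv] with α hα
        have hrel : G α = Real.exp (-α * b j0) * Ghat α := by
          rw [hGhatdef, Finset.mul_sum]
          refine Finset.sum_congr rfl fun i _ => ?_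
          rw [show Real.exp (-α * b j0) * (pbar i * (b i - β) * Real.exp (-α * (b i - b j0)))
              = pbar i * (b i - β) * (Real.exp (-α * b j0) * Real.exp (-α * (b i - b j0)))
              by ring,
            ← Real.exp_add, show -α * b j0 + -α * (b i - b j0) = -α * b i by ring]
        rw [hrel]
        exact mul_neg_of_pos_of_neg (Real.exp_pos _) hα
      obtain ⟨A, hAneg, hA0⟩ := (hEv.and (eventually_ge_atTop (0:ℝ))).exists
      obtain ⟨αs, hαsmem, hGαs⟩ :=
        intermediate_value_Icc' hA0 hGcont.continuousOn
          (⟨hAneg.le, hG0.le⟩ : (0:ℝ) ∈ Set.Icc (G A) (G 0))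
      have hαs0 : 0 ≤ αs := hαsmem.1
      set Zs := ∑ s', pbar s' * Real.exp (-αs * b s') with hZs
      have hZspos : 0 < Zs := hZpos αs
      set ps : Fin S → ℝ := fun i => pbar i * Real.exp (-αs * b i) / Zs with hps
      have hps0 : ∀ i, 0 ≤ ps i := fun i =>
        le_of_lt (div_pos (mul_pos (hp0 i) (Real.exp_pos _)) hZspos)
      have hps1 : ∑ i, ps i = 1 := by
        rw [hps, ← Finset.sum_div, ← hZs, div_self hZspos.ne']
      have hkey : ∑ i, pbar i * b i * Real.exp (-αs * b i) = β * Zs := by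
        have hexp : G αs = ∑ i, pbar i * b i * Real.exp (-αs * b i) - β * Zs := by
          rw [hGdef, hZs, Finset.mul_sum, ← Finset.sum_sub_distrib]
          exact Finset.sum_congr rfl fun i _ => by ring
        have := hGαs
        rw [hexp] at this
        linarith
      have hpsb : ∑ i, b i * ps i = β := by
        have : ∀ i, b i * ps i = pbar i * b i * Real.exp (-αs * b i) / Zs := by
          intro i; rw [hps]; ring
        rw [Finset.sum_congr rfl (fun i _ => this i), ← Finset.sum_div, hkey,
          mul_div_assoc, div_self hZspos.ne', mul_one]
      have hval : ∑ s', ps s' * Real.log (ps s' / pbar s')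
          = -β * αs - Real.log Zs := by
        have hterm : ∀ i, ps i * Real.log (ps i / pbar i)
            = -αs * (b i * ps i) - Real.log Zs * ps i := by
          intro i
          have hratio : ps i / pbar i = Real.exp (-αs * b i) / Zs := by
            rw [hps]; dsimp only
            rw [div_div, mul_comm Zs (pbar i), mul_div_mul_left _ _ (hp0 i).ne']
          rw [hratio, Real.log_div (Real.exp_ne_zero _) hZspos.ne', Real.log_exp]
          ring
        rw [Finset.sum_congr rfl (fun i _ => hterm i), Finset.sum_sub_distrib,
          ← Finset.mul_sum, ← Finset.mul_sum, hpsb, hps1, mul_one]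
        ring
      have hvP : (-β * αs - Real.log Zs) ∈ P := ⟨ps, hps0, hps1, hpsb.le, hval.symm⟩
      have hBddD : BddAbove D := ⟨_, fun w hw => weak _ hvP w hw⟩
      exact ⟨_, hvP, le_csSup hBddD ⟨αs, hαs0, rfl⟩⟩
  obtain ⟨v, hvP, hvle⟩ := hmain
  have hBddP : BddBelow P := ⟨0, fun u hu => weak u hu 0 h0D⟩
  apply le_antisymm
  · exact le_trans (csInf_le hBddP hvP) hvle
  · exact csSup_le ⟨0, h0D⟩ fun w hw => le_csInf ⟨v, hvP⟩ fun u hu => weak u hu w hw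
end

section
/- For the variation distance, the optimal value of the projection problem min{ ∑_{s'} |p_{s'} − p̄_{s'}| : p ∈ Δ_S, bᵀp ≤ β } equals sup_{α ≥ 0} { 2 + α(min_i b_i − β) − ∑_{s'} p̄_{s'} · max{0, 2 + α(min_i b_i − b_{s'})} }, provided p̄ ∈ Δ_S with p̄ > 0 and min_i b_i ≤ β < p̄ᵀb. -/
open Finset in
set_option maxHeartbeats 2000000 in
/-- For the variation distance, the optimal value of the projection problem
min { ∑ |p − p̄| : p ∈ Δ_S, bᵀp ≤ β } equals
sup_{α ≥ 0} { 2 + α(min b − β) − ∑ p̄ [2 + α(min b − b_{s'})]₊ },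
provided p̄ > 0 and min b ≤ β < p̄ᵀb. -/
theorem variation_projection_duality {S : ℕ} [NeZero S] (pbar b : Fin S → ℝ) (β : ℝ)
    (hp0 : ∀ i, 0 < pbar i) (hp1 : ∑ i, pbar i = 1)
    (hb : ∀ i, 0 ≤ b i) (hβ0 : 0 ≤ β)
    (hβ1 : (⨅ i, b i) ≤ β) (hβ2 : β < ∑ i, pbar i * b i) :
    sInf {v : ℝ | ∃ p : Fin S → ℝ, (∀ i, 0 ≤ p i) ∧ (∑ i, p i = 1) ∧
        (∑ i, b i * p i) ≤ β ∧ v = ∑ s', |p s' - pbar s'|} =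
    sSup {v : ℝ | ∃ α : ℝ, 0 ≤ α ∧
        v = 2 + α * ((⨅ i, b i) - β) -
          ∑ s', pbar s' * max 0 (2 + α * ((⨅ i, b i) - b s'))} := by
  set m := ⨅ i, b i with hm
  have hbdd : BddBelow (Set.range b) := Finite.bddBelow_range b
  have hm_le : ∀ i, m ≤ b i := fun i => ciInf_le hbdd i
  obtain ⟨s₀, hs₀⟩ : ∃ s₀, ∀ i, b s₀ ≤ b i := Finite.exists_min b
  have hms₀ : b s₀ = m := le_antisymm (le_ciInf hs₀) (hm_le s₀)
  set d : Fin S → ℝ := fun s => b s - m with hd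
  have hd0 : ∀ s, 0 ≤ d s := fun s => sub_nonneg.2 (hm_le s)
  set D0 : ℝ := β - m with hD0def
  have hD0 : 0 ≤ D0 := sub_nonneg.2 hβ1
  have hFull : D0 < ∑ s, pbar s * d s := by
    have h1 : ∑ s, pbar s * d s = (∑ s, pbar s * b s) - m := by
      simp only [hd, mul_sub, Finset.sum_sub_distrib, ← Finset.sum_mul, hp1, one_mul]
    rw [h1, hD0def]; linarith
  -- Weak duality
  have hweak : ∀ p : Fin S → ℝ, (∀ i, 0 ≤ p i) → (∑ i, p i = 1) → (∑ i, b i * p i) ≤ β →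
      ∀ α : ℝ, 0 ≤ α →
      2 + α * (m - β) - ∑ s', pbar s' * max 0 (2 + α * (m - b s')) ≤
        ∑ s', |p s' - pbar s'| := by
    intro p hp hps hpb α hα
    have h1 : 2 + α * (m - β) ≤ ∑ s, p s * (2 + α * (m - b s)) := by
      have he : ∑ s, p s * (2 + α * (m - b s)) =
          (2 + α * m) * (∑ s, p s) - α * ∑ s, b s * p s := by
        rw [Finset.mul_sum, Finset.mul_sum, ← Finset.sum_sub_distrib]
        exact Finset.sum_congr rfl fun s _ => by ring
      rw [he, hps]
      nlinarith [mul_nonneg hα (sub_nonneg.2 hpb)]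
    have h2 : ∀ s, p s * (2 + α * (m - b s)) ≤ p s * max 0 (2 + α * (m - b s)) :=
      fun s => mul_le_mul_of_nonneg_left (le_max_right _ _) (hp s)
    have h3 : ∀ s, (p s - pbar s) * max 0 (2 + α * (m - b s)) ≤
        (p s - pbar s) + |p s - pbar s| := by
      intro s
      set x := p s - pbar s
      set y := max 0 (2 + α * (m - b s)) with hy
      have hy0 : 0 ≤ y := le_max_left _ _
      have hy2 : y ≤ 2 := by
        have : α * (m - b s) ≤ 0 :=
          mul_nonpos_of_nonneg_of_nonpos hα (sub_nonpos.2 (hm_le s))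
        simp only [hy, max_le_iff]; constructor <;> linarith
      nlinarith [mul_nonneg (sub_nonneg.2 (le_abs_self x)) hy0,
        mul_nonneg (by linarith [neg_abs_le x] : (0:ℝ) ≤ |x| + x) (by linarith : (0:ℝ) ≤ 2 - y)]
    have h4 : ∑ s, ((p s - pbar s) + |p s - pbar s|) = ∑ s, |p s - pbar s| := by
      rw [Finset.sum_add_distrib, Finset.sum_sub_distrib, hps, hp1]; ring
    calc 2 + α * (m - β) - ∑ s', pbar s' * max 0 (2 + α * (m - b s'))
        ≤ (∑ s, p s * (2 + α * (m - b s))) - ∑ s', pbar s' * max 0 (2 + α * (m - b s')) := by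
          linarith
      _ ≤ (∑ s, p s * max 0 (2 + α * (m - b s))) - ∑ s', pbar s' * max 0 (2 + α * (m - b s')) := by
          exact sub_le_sub_right (Finset.sum_le_sum fun s _ => h2 s) _
      _ = ∑ s, (p s - pbar s) * max 0 (2 + α * (m - b s)) := by
          rw [← Finset.sum_sub_distrib]; exact Finset.sum_congr rfl fun s _ => by ring
      _ ≤ ∑ s, ((p s - pbar s) + |p s - pbar s|) := Finset.sum_le_sum fun s _ => h3 s
      _ = ∑ s', |p s' - pbar s'| := h4
  -- Strong duality: explicit primal/dual pair
  classical
  obtain ⟨s₁, hs₁⟩ : ∃ s, 0 < d s := by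
    by_contra h
    push_neg at h
    have hall : ∑ s, pbar s * b s ≤ β := by
      have hbm : ∀ s, b s = m := fun s => le_antisymm (by have := h s; simp only [hd] at this; linarith) (hm_le s)
      calc ∑ s, pbar s * b s = ∑ s, pbar s * m := Finset.sum_congr rfl fun s _ => by rw [hbm s]
        _ = m := by rw [← Finset.sum_mul, hp1, one_mul]
        _ ≤ β := hβ1
    linarith
  set Tset : Finset ℝ := (Finset.univ.filter (fun s => 0 < d s)).image d with hTset
  have hTne : Tset.Nonempty :=
    ⟨d s₁, Finset.mem_image.2 ⟨s₁, Finset.mem_filter.2 ⟨Finset.mem_univ _, hs₁⟩, rfl⟩⟩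
  have hTpos : ∀ t ∈ Tset, 0 < t := by
    intro t ht
    obtain ⟨s, hs, rfl⟩ := Finset.mem_image.1 ht
    exact (Finset.mem_filter.1 hs).2
  set G : ℝ → ℝ := fun t => ∑ s ∈ Finset.univ.filter (fun s => d s ≤ t), pbar s * d s with hG
  set S' : Finset ℝ := Tset.filter (fun t => D0 ≤ G t) with hS'
  have hS'ne : S'.Nonempty := by
    refine ⟨Tset.max' hTne, Finset.mem_filter.2 ⟨Tset.max'_mem hTne, ?_⟩⟩
    have hfil : Finset.univ.filter (fun s => d s ≤ Tset.max' hTne) = Finset.univ := by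
      refine Finset.filter_true_of_mem fun s _ => ?_
      rcases eq_or_lt_of_le (hd0 s) with h | h
      · exact le_of_lt (h ▸ hTpos _ (Tset.max'_mem hTne))
      · exact Tset.le_max' _ (Finset.mem_image.2 ⟨s, Finset.mem_filter.2 ⟨Finset.mem_univ _, h⟩, rfl⟩)
    simp only [hG, hfil]
    exact le_of_lt hFull
  set t₀ : ℝ := S'.min' hS'ne with ht₀
  have ht₀T : t₀ ∈ Tset := (Finset.mem_filter.1 (S'.min'_mem hS'ne)).1
  have ht₀pos : 0 < t₀ := hTpos _ ht₀T
  have ht₀G : D0 ≤ G t₀ := (Finset.mem_filter.1 (S'.min'_mem hS'ne)).2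
  have hmin : ∀ t ∈ Tset, t < t₀ → G t < D0 := by
    intro t ht hlt
    by_contra h
    push_neg at h
    exact absurd (S'.min'_le t (Finset.mem_filter.2 ⟨ht, h⟩)) (not_le.2 hlt)
  set A : Finset (Fin S) := Finset.univ.filter (fun s : Fin S => d s < t₀) with hA
  set Bd : Finset (Fin S) := Finset.univ.filter (fun s : Fin S => d s = t₀) with hBd
  set C : Finset (Fin S) := Finset.univ.filter (fun s : Fin S => t₀ < d s) with hC
  have tri : ∀ g : Fin S → ℝ, ∑ s, g s = ∑ s ∈ A, g s + ∑ s ∈ Bd, g s + ∑ s ∈ C, g s := by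
    intro g
    have h1 := Finset.sum_filter_add_sum_filter_not Finset.univ (fun s => d s < t₀) g
    have h2 := Finset.sum_filter_add_sum_filter_not
      (Finset.univ.filter (fun s => ¬ d s < t₀)) (fun s => d s = t₀) g
    rw [Finset.filter_filter, Finset.filter_filter] at h2
    have e1 : Finset.univ.filter (fun s : Fin S => ¬ d s < t₀ ∧ d s = t₀) = Bd :=
      Finset.filter_congr fun s _ => ⟨fun h => h.2, fun h => ⟨not_lt.2 h.ge, h⟩⟩
    have e2 : Finset.univ.filter (fun s : Fin S => ¬ d s < t₀ ∧ ¬ d s = t₀) = C :=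
      Finset.filter_congr fun s _ =>
        ⟨fun h => lt_of_le_of_ne (not_lt.1 h.1) (Ne.symm h.2),
         fun h => ⟨not_lt.2 h.le, ne_of_gt h⟩⟩
    rw [e1, e2] at h2
    linarith [h1, h2]
  set L : ℝ := ∑ s ∈ A, pbar s * d s with hL
  set P : ℝ := ∑ s ∈ Bd, pbar s with hPdef
  set R : ℝ := ∑ s ∈ C, pbar s with hRdef
  have hPpos : 0 < P := by
    obtain ⟨s₂, hs₂, ht₂⟩ := Finset.mem_image.1 ht₀T
    exact Finset.sum_pos' (fun s _ => (hp0 s).le)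
      ⟨s₂, Finset.mem_filter.2 ⟨Finset.mem_univ _, ht₂⟩, hp0 s₂⟩
  have hRnn : 0 ≤ R := Finset.sum_nonneg fun s _ => (hp0 s).le
  have hLnn : 0 ≤ L := Finset.sum_nonneg fun s _ => mul_nonneg (hp0 s).le (hd0 s)
  have hGt₀ : G t₀ = L + t₀ * P := by
    have h2 := Finset.sum_filter_add_sum_filter_not
      (Finset.univ.filter (fun s => d s ≤ t₀)) (fun s => d s < t₀) (fun s => pbar s * d s)
    rw [Finset.filter_filter, Finset.filter_filter] at h2
    have e1 : Finset.univ.filter (fun s : Fin S => d s ≤ t₀ ∧ d s < t₀) = A :=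
      Finset.filter_congr fun s _ => ⟨And.right, fun h => ⟨h.le, h⟩⟩
    have e2 : Finset.univ.filter (fun s : Fin S => d s ≤ t₀ ∧ ¬ d s < t₀) = Bd :=
      Finset.filter_congr fun s _ =>
        ⟨fun h => le_antisymm h.1 (not_lt.1 h.2), fun h => ⟨h.le, not_lt.2 h.ge⟩⟩
    rw [e1, e2] at h2
    have e3 : ∑ s ∈ Bd, pbar s * d s = t₀ * P := by
      rw [hPdef, Finset.mul_sum]
      refine Finset.sum_congr rfl fun s hs => ?_
      have hds : d s = t₀ := by
        have := Finset.mem_filter.1 hs; simpa [hBd] using this.2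
      rw [hds]; ring
    simp only [hG]
    rw [← h2, e3]
  have hLle : L ≤ D0 := by
    by_cases hB : (Finset.univ.filter (fun s : Fin S => 0 < d s ∧ d s < t₀)).Nonempty
    · obtain ⟨s₂, hs₂mem, hs₂max⟩ :=
        Finset.exists_max_image (Finset.univ.filter (fun s : Fin S => 0 < d s ∧ d s < t₀)) d hB
      have hmem := Finset.mem_filter.1 hs₂mem
      have h1 : d s₂ ∈ Tset :=
        Finset.mem_image.2 ⟨s₂, Finset.mem_filter.2 ⟨Finset.mem_univ _, hmem.2.1⟩, rfl⟩
      have h2 : d s₂ < t₀ := hmem.2.2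
      have h3 : G (d s₂) < D0 := hmin _ h1 h2
      have h4 : A = Finset.univ.filter (fun s => d s ≤ d s₂) := by
        refine Finset.filter_congr fun s _ => ⟨fun hlt => ?_, fun hle => lt_of_le_of_lt hle h2⟩
        rcases eq_or_lt_of_le (hd0 s) with h0 | h0
        · rw [← h0]; exact hd0 s₂
        · exact hs₂max s (Finset.mem_filter.2 ⟨Finset.mem_univ _, h0, hlt⟩)
      have h5 : L = G (d s₂) := by rw [hL, h4]
      linarith
    · have hz : L = 0 := Finset.sum_eq_zero fun s hs => by
        have h1 : ¬ (0 < d s ∧ d s < t₀) := fun hc => hB ⟨s, Finset.mem_filter.2 ⟨Finset.mem_univ _, hc⟩⟩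
        have h2 : d s < t₀ := by
          have := Finset.mem_filter.1 hs; simpa [hA] using this.2
        have h3 : d s = 0 := le_antisymm (not_lt.1 fun h => h1 ⟨h, h2⟩) (hd0 s)
        rw [h3, mul_zero]
      rw [hz]; exact hD0
  set U : ℝ := L + t₀ * P with hUdef
  have hU : D0 ≤ U := by rw [← hGt₀]; exact ht₀G
  have htP : 0 < t₀ * P := mul_pos ht₀pos hPpos
  set θ : ℝ := (U - D0) / (t₀ * P) with hθdef
  have hθ0 : 0 ≤ θ := div_nonneg (by linarith) htP.le
  have hθ1 : θ ≤ 1 := (div_le_one htP).2 (by rw [hUdef]; linarith)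
  have hθkey : θ * (t₀ * P) = U - D0 := div_mul_cancel₀ _ (ne_of_gt htP)
  have hds₀ : d s₀ = 0 := by simp only [hd]; rw [hms₀]; ring
  set q : Fin S → ℝ :=
    fun s => if d s < t₀ then pbar s else if d s = t₀ then (1 - θ) * pbar s else 0 with hq
  set Mv : ℝ := θ * P + R with hMdef
  have hMnn : 0 ≤ Mv := add_nonneg (mul_nonneg hθ0 hPpos.le) hRnn
  set pstar : Fin S → ℝ := fun s => q s + (if s = s₀ then Mv else 0) with hpstar
  -- regional values of q
  have hqA : ∀ s ∈ A, q s = pbar s := fun s hs => by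
    have : d s < t₀ := by have := Finset.mem_filter.1 hs; simpa [hA] using this.2
    simp [hq, this]
  have hqBd : ∀ s ∈ Bd, q s = (1 - θ) * pbar s := fun s hs => by
    have h1 : d s = t₀ := by have := Finset.mem_filter.1 hs; simpa [hBd] using this.2
    simp [hq, h1, lt_irrefl]
  have hqC : ∀ s ∈ C, q s = 0 := fun s hs => by
    have h1 : t₀ < d s := by have := Finset.mem_filter.1 hs; simpa [hC] using this.2
    simp [hq, not_lt.2 h1.le, ne_of_gt h1]
  have hQA : ∑ s ∈ A, pbar s = 1 - P - R := by
    have h := tri pbar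
    rw [hp1] at h
    linarith [hPdef, hRdef]
  have hsumq : ∑ s, q s = (1 - P - R) + (1 - θ) * P := by
    rw [tri q, Finset.sum_congr rfl hqA, Finset.sum_congr rfl hqBd, Finset.sum_congr rfl hqC,
      ← Finset.mul_sum, hQA]
    simp [hPdef]
  have hsum_pstar : ∑ s, pstar s = 1 := by
    simp only [hpstar]
    rw [Finset.sum_add_distrib, Finset.sum_ite_eq' Finset.univ s₀ (fun _ => Mv),
      if_pos (Finset.mem_univ _), hsumq, hMdef]
    ring
  have hpstar_nn : ∀ s, 0 ≤ pstar s := by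
    intro s
    have hqnn : 0 ≤ q s := by
      simp only [hq]
      split_ifs
      · exact (hp0 s).le
      · exact mul_nonneg (by linarith) (hp0 s).le
      · exact le_refl 0
    have he : pstar s = q s + (if s = s₀ then Mv else 0) := rfl
    rw [he]
    split_ifs <;> linarith
  have hqs₀ : q s₀ = pbar s₀ := by simp [hq, hds₀, ht₀pos]
  -- constraint
  have hdq : ∑ s, d s * q s = L + (1 - θ) * (t₀ * P) := by
    rw [tri (fun s => d s * q s)]
    have e1 : ∑ s ∈ A, d s * q s = L := by
      rw [hL]; exact Finset.sum_congr rfl fun s hs => by rw [hqA s hs]; ring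
    have e2 : ∑ s ∈ Bd, d s * q s = (1 - θ) * (t₀ * P) := by
      rw [hPdef, Finset.mul_sum, Finset.mul_sum]
      refine Finset.sum_congr rfl fun s hs => ?_
      have h1 : d s = t₀ := by have := Finset.mem_filter.1 hs; simpa [hBd] using this.2
      rw [hqBd s hs, h1]; ring
    have e3 : ∑ s ∈ C, d s * q s = 0 :=
      Finset.sum_eq_zero fun s hs => by rw [hqC s hs, mul_zero]
    rw [e1, e2, e3]; ring
  have hdpstar : ∑ s, d s * pstar s = D0 := by
    have h1 : ∑ s, d s * pstar s = ∑ s, d s * q s + ∑ s, (if s = s₀ then d s * Mv else 0) := by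
      rw [← Finset.sum_add_distrib]
      refine Finset.sum_congr rfl fun s _ => ?_
      simp only [hpstar]
      split_ifs <;> ring
    rw [h1, Finset.sum_ite_eq' Finset.univ s₀ (fun s => d s * Mv), if_pos (Finset.mem_univ _),
      hds₀, zero_mul, add_zero, hdq]
    have : (1 - θ) * (t₀ * P) = t₀ * P - (U - D0) := by rw [← hθkey]; ring
    rw [this, hUdef]; ring
  have hbpstar : ∑ s, b s * pstar s = β := by
    have h1 : ∑ s, b s * pstar s = m * (∑ s, pstar s) + ∑ s, d s * pstar s := by
      rw [Finset.mul_sum, ← Finset.sum_add_distrib]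
      refine Finset.sum_congr rfl fun s _ => ?_
      simp only [hd]; ring
    rw [h1, hsum_pstar, hdpstar, hD0def]; ring
  -- objective value
  have hobj : ∑ s, |pstar s - pbar s| = 2 * Mv := by
    have h1 : ∀ s, |pstar s - pbar s| = |q s - pbar s| + (if s = s₀ then Mv else 0) := by
      intro s
      simp only [hpstar]
      split_ifs with h
      · rw [h, hqs₀]; simp [abs_of_nonneg hMnn]
      · simp
    rw [Finset.sum_congr rfl fun s _ => h1 s, Finset.sum_add_distrib,
      Finset.sum_ite_eq' Finset.univ s₀ (fun _ => Mv), if_pos (Finset.mem_univ _)]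
    have h2 : ∑ s, |q s - pbar s| = θ * P + R := by
      rw [tri (fun s => |q s - pbar s|)]
      have e1 : ∑ s ∈ A, |q s - pbar s| = 0 :=
        Finset.sum_eq_zero fun s hs => by rw [hqA s hs]; simp
      have e2 : ∑ s ∈ Bd, |q s - pbar s| = θ * P := by
        rw [hPdef, Finset.mul_sum]
        refine Finset.sum_congr rfl fun s hs => ?_
        rw [hqBd s hs]
        have : (1 - θ) * pbar s - pbar s = -(θ * pbar s) := by ring
        rw [this, abs_neg, abs_of_nonneg (mul_nonneg hθ0 (hp0 s).le)]
      have e3 : ∑ s ∈ C, |q s - pbar s| = R := by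
        rw [hRdef]
        refine Finset.sum_congr rfl fun s hs => ?_
        rw [hqC s hs]
        simp [abs_of_nonneg (hp0 s).le]
      rw [e1, e2, e3]; ring
    rw [h2, hMdef]; ring
  -- dual value at α₀ = 2 / t₀
  set α₀ : ℝ := 2 / t₀ with hα₀
  have hα₀pos : 0 < α₀ := div_pos two_pos ht₀pos
  have hdual : 2 + α₀ * (m - β) - ∑ s', pbar s' * max 0 (2 + α₀ * (m - b s')) = 2 * Mv := by
    have hterm : ∀ s, 2 + α₀ * (m - b s) = 2 - α₀ * d s := by
      intro s; simp only [hd]; ring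
    have hmaxsum : ∑ s', pbar s' * max 0 (2 + α₀ * (m - b s')) =
        2 * (1 - P - R) - α₀ * L := by
      rw [tri (fun s => pbar s * max 0 (2 + α₀ * (m - b s)))]
      have e1 : ∑ s ∈ A, pbar s * max 0 (2 + α₀ * (m - b s)) = 2 * (1 - P - R) - α₀ * L := by
        have : ∀ s ∈ A, pbar s * max 0 (2 + α₀ * (m - b s)) =
            2 * pbar s - α₀ * (pbar s * d s) := by
          intro s hs
          have hlt : d s < t₀ := by have := Finset.mem_filter.1 hs; simpa [hA] using this.2
          have hpos : 0 < 2 + α₀ * (m - b s) := by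
            rw [hterm s]
            have : α₀ * d s < α₀ * t₀ := by
              rcases eq_or_lt_of_le (hd0 s) with h0 | h0
              · rw [← h0, mul_zero]; exact mul_pos hα₀pos ht₀pos
              · exact (mul_lt_mul_iff_right₀ hα₀pos).2 hlt
            have ht : α₀ * t₀ = 2 := by rw [hα₀]; field_simp
            linarith
          rw [max_eq_right hpos.le, hterm s]; ring
        rw [Finset.sum_congr rfl this, Finset.sum_sub_distrib, ← Finset.mul_sum, ← Finset.mul_sum,
          hQA, ← hL]
      have e2 : ∑ s ∈ Bd, pbar s * max 0 (2 + α₀ * (m - b s)) = 0 := by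
        refine Finset.sum_eq_zero fun s hs => ?_
        have h1 : d s = t₀ := by have := Finset.mem_filter.1 hs; simpa [hBd] using this.2
        have : 2 + α₀ * (m - b s) = 0 := by
          rw [hterm s, h1, hα₀]; field_simp; ring
        rw [this]; simp
      have e3 : ∑ s ∈ C, pbar s * max 0 (2 + α₀ * (m - b s)) = 0 := by
        refine Finset.sum_eq_zero fun s hs => ?_
        have h1 : t₀ < d s := by have := Finset.mem_filter.1 hs; simpa [hC] using this.2
        have hneg : 2 + α₀ * (m - b s) ≤ 0 := by
          rw [hterm s]
          have : α₀ * t₀ ≤ α₀ * d s := (mul_le_mul_iff_right₀ hα₀pos).2 h1.le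
          have ht : α₀ * t₀ = 2 := by rw [hα₀]; field_simp
          linarith
        rw [max_eq_left hneg]; simp
      rw [e1, e2, e3]; ring
    rw [hmaxsum]
    have hkey2 : α₀ * (D0 - L) = 2 * P - 2 * θ * P := by
      have h1 : t₀ * (α₀ * (D0 - L)) = t₀ * (2 * P - 2 * θ * P) := by
        have hl : t₀ * α₀ = 2 := by rw [hα₀]; field_simp
        have h2 : θ * (t₀ * P) = U - D0 := hθkey
        calc t₀ * (α₀ * (D0 - L)) = (t₀ * α₀) * (D0 - L) := by ring
          _ = 2 * (D0 - L) := by rw [hl]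
          _ = t₀ * (2 * P - 2 * θ * P) := by
              have : D0 - L = t₀ * P - θ * (t₀ * P) := by rw [h2, hUdef]; ring
              rw [this]; ring
      exact mul_left_cancel₀ (ne_of_gt ht₀pos) h1
    have : α₀ * (m - β) = - (α₀ * D0) := by rw [hD0def]; ring
    rw [this]
    rw [hMdef]
    nlinarith [hkey2]
  -- assemble
  set PrimalSet := {v : ℝ | ∃ p : Fin S → ℝ, (∀ i, 0 ≤ p i) ∧ (∑ i, p i = 1) ∧
      (∑ i, b i * p i) ≤ β ∧ v = ∑ s', |p s' - pbar s'|} with hPS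
  set DualSet := {v : ℝ | ∃ α : ℝ, 0 ≤ α ∧
      v = 2 + α * (m - β) - ∑ s', pbar s' * max 0 (2 + α * (m - b s'))} with hDS
  have hPmem : (2 * Mv) ∈ PrimalSet :=
    ⟨pstar, hpstar_nn, hsum_pstar, le_of_eq hbpstar, hobj.symm⟩
  have hDmem : (2 * Mv) ∈ DualSet := ⟨α₀, hα₀pos.le, hdual.symm⟩
  have hub : ∀ v ∈ DualSet, ∀ w ∈ PrimalSet, v ≤ w := by
    rintro v ⟨α, hα, rfl⟩ w ⟨p, hpn, hp1', hpb, rfl⟩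
    exact hweak p hpn hp1' hpb α hα
  have hbddP : BddBelow PrimalSet := ⟨2 * Mv, fun w hw => hub _ hDmem w hw⟩
  have hbddD : BddAbove DualSet := ⟨2 * Mv, fun v hv => hub v hv _ hPmem⟩
  refine le_antisymm ?_ ?_
  · calc sInf PrimalSet ≤ 2 * Mv := csInf_le hbddP hPmem
      _ ≤ sSup DualSet := le_csSup hbddD hDmem
  · exact csSup_le ⟨2 * Mv, hDmem⟩ fun v hv =>
      le_csInf ⟨2 * Mv, hPmem⟩ fun w hw => hub v hv w hw
end

section
/- In the bivariate dual problem for the Burg entropy, maximize −βα + ζ + ∑_{s'} p̄_{s'} log(1 + α b_{s'} − ζ) over α ≥ 0, ζ ≤ 1 + α·min_i b_i: at any KKT point (α*, ζ*) with inactive constraint ζ* < 1 + α*·min_i b_i and with the stationarity conditions ∑_{s'} p̄_{s'} b_{s'}/(1 + α*b_{s'} − ζ*) = β − γ and ∑_{s'} p̄_{s'}/(1 + α*b_{s'} − ζ*) = 1 with α*γ = 0, γ ≥ 0, it holds that ζ* = α*β. -/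
open Finset in
/-- At a KKT point (α*, ζ*) of the bivariate Burg-entropy dual with inactive
constraint ζ* < 1 + α*·min b and stationarity conditions
∑ p̄ b/(1 + α*b − ζ*) = β − γ and ∑ p̄/(1 + α*b − ζ*) = 1 with α*γ = 0, γ ≥ 0,
it holds that ζ* = α*β. -/
theorem burg_kkt_zeta {S : ℕ} [NeZero S] (pbar b : Fin S → ℝ) (β αstar ζstar γ : ℝ)
    (hp0 : ∀ i, 0 < pbar i) (hp1 : ∑ i, pbar i = 1)
    (hb : ∀ i, 0 ≤ b i) (hβ : (⨅ i, b i) < β)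
    (hα : 0 ≤ αstar)
    (hpos : ∀ s' : Fin S, 0 < 1 + αstar * b s' - ζstar)
    (hinactive : ζstar < 1 + αstar * (⨅ i, b i))
    (hstat1 : ∑ s', pbar s' * b s' / (1 + αstar * b s' - ζstar) = β - γ)
    (hstat2 : ∑ s', pbar s' / (1 + αstar * b s' - ζstar) = 1)
    (hcomp : αstar * γ = 0) (hγ : 0 ≤ γ) :
    ζstar = αstar * β := by
  have H : ∑ s', (pbar s' / (1 + αstar * b s' - ζstar)
      + αstar * (pbar s' * b s' / (1 + αstar * b s' - ζstar))
      - ζstar * (pbar s' / (1 + αstar * b s' - ζstar))) = ∑ s', pbar s' := by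
    apply Finset.sum_congr rfl
    intro s' _
    have hne := (hpos s').ne'
    field_simp
  rw [Finset.sum_sub_distrib, Finset.sum_add_distrib, ← Finset.mul_sum,
    ← Finset.mul_sum, hstat1, hstat2, hp1] at H
  nlinarith [hcomp]
end
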